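/- Let σ > 0, μ₁, μ₂ ∈ ℝ and α > 1. Then the Rényi divergence of order α between the one-dimensional Gaussian measures N(μ₁, σ²) and N(μ₂, σ²) equals α(μ₁ − μ₂)²/(2σ²). In particular, a real-valued Gaussian mechanism with noise scale σ and sensitivity 1 satisfies (α, α/(2σ²))-RDP for every α > 1. -/

import Mathlib

open MeasureTheory ProbabilityTheory Real

/-- Rényi divergence of order `α` between measures `P` and `Q`:
`D_α(P‖Q) = (α−1)⁻¹ · log ∫ (dP/dQ)^α dQ`. -/
noncomputable def renyiDiv {X : Type*} [MeasurableSpace X] (α : ℝ) (P Q : Measure X) : ℝ :=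
  (α - 1)⁻¹ * Real.log (∫ x, ((P.rnDeriv Q x).toReal) ^ α ∂Q)

/-- Pointwise identity: the `α`-power of the ratio of two Gaussian densities with equal variance,
weighted by the second density, is a constant times another Gaussian density. -/
lemma gauss_key (σ μ₁ μ₂ α x : ℝ) (hσ : 0 < σ) :
    gaussianPDFReal μ₂ ⟨σ ^ 2, sq_nonneg σ⟩ x *
      (gaussianPDFReal μ₁ ⟨σ ^ 2, sq_nonneg σ⟩ x /
        gaussianPDFReal μ₂ ⟨σ ^ 2, sq_nonneg σ⟩ x) ^ α
    = Real.exp (α * (α - 1) * (μ₁ - μ₂) ^ 2 / (2 * σ ^ 2)) *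
        gaussianPDFReal (μ₂ + α * (μ₁ - μ₂)) ⟨σ ^ 2, sq_nonneg σ⟩ x := by
  have hσ2 : (0:ℝ) < σ ^ 2 := by positivity
  set v : NNReal := ⟨σ ^ 2, sq_nonneg σ⟩ with hv
  have hvv : (v : ℝ) = σ ^ 2 := rfl
  simp only [gaussianPDFReal, hvv]
  set c : ℝ := (√(2 * π * σ ^ 2))⁻¹ with hc_def
  have hc : 0 < c := by rw [hc_def]; positivity
  rw [mul_div_mul_left _ _ hc.ne', ← Real.exp_sub, ← Real.exp_mul,
    mul_assoc, ← Real.exp_add, mul_comm (rexp (α * (α - 1) * (μ₁ - μ₂) ^ 2 / (2 * σ ^ 2))),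
    mul_assoc, ← Real.exp_add]
  congr 1
  rw [Real.exp_eq_exp]
  field_simp
  ring

/-- The Rényi divergence of order `α > 1` between `N(μ₁,σ²)` and `N(μ₂,σ²)` equals
`α (μ₁ − μ₂)² / (2σ²)`; in particular a Gaussian mechanism with sensitivity 1 and noise scale
`σ` satisfies `(α, α/(2σ²))`-RDP. -/
theorem renyiDiv_gaussianReal (σ μ₁ μ₂ : ℝ) (hσ : 0 < σ) (α : ℝ) (hα : 1 < α) :
    renyiDiv α (gaussianReal μ₁ ⟨σ ^ 2, sq_nonneg σ⟩) (gaussianReal μ₂ ⟨σ ^ 2, sq_nonneg σ⟩)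
      = α * (μ₁ - μ₂) ^ 2 / (2 * σ ^ 2) := by
  set v : NNReal := ⟨σ ^ 2, sq_nonneg σ⟩ with hv_def
  have hv : v ≠ 0 := by
    refine fun h => ?_
    have := congrArg NNReal.toReal h
    simp only [NNReal.coe_mk, NNReal.coe_zero] at this
    exact (pow_ne_zero 2 hσ.ne') this
  set P := gaussianReal μ₁ v with hP_def
  set Q := gaussianReal μ₂ v with hQ_def
  have hQ : Q = volume.withDensity (gaussianPDF μ₂ v) := gaussianReal_of_var_ne_zero _ hv
  -- the Radon–Nikodym derivative
  have h1 : P.rnDeriv Q =ᵐ[volume]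
      fun x => (gaussianPDF μ₂ v x)⁻¹ * gaussianPDF μ₁ v x := by
    have h2 := Measure.rnDeriv_withDensity_right P volume
      (measurable_gaussianPDF μ₂ v).aemeasurable
      (ae_of_all _ fun x => (gaussianPDF_pos _ hv x).ne')
      (ae_of_all _ fun x => ENNReal.ofReal_ne_top)
    rw [← hQ] at h2
    filter_upwards [h2, rnDeriv_gaussianReal μ₁ v] with x hx hx1
    rw [hx, hx1]
  have hQac : Q ≪ volume := by rw [hQ_def]; exact gaussianReal_absolutelyContinuous _ hv
  have h3 : ∀ᵐ x ∂Q, ((P.rnDeriv Q x).toReal) ^ α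
      = (gaussianPDFReal μ₁ v x / gaussianPDFReal μ₂ v x) ^ α := by
    refine hQac.ae_eq ?_
    filter_upwards [h1] with x hx
    rw [hx]
    simp only [gaussianPDF]
    rw [ENNReal.toReal_mul, ENNReal.toReal_inv,
      ENNReal.toReal_ofReal (gaussianPDFReal_nonneg _ _ _),
      ENNReal.toReal_ofReal (gaussianPDFReal_nonneg _ _ _), inv_mul_eq_div]
  -- compute the integral
  have h4 : (∫ x, ((P.rnDeriv Q x).toReal) ^ α ∂Q)
      = Real.exp (α * (α - 1) * (μ₁ - μ₂) ^ 2 / (2 * σ ^ 2)) := by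
    rw [integral_congr_ae h3, hQ]
    have hpdf : gaussianPDF μ₂ v = fun x => ((gaussianPDFReal μ₂ v x).toNNReal : ENNReal) := rfl
    rw [hpdf, integral_withDensity_eq_integral_smul₀
      ((measurable_gaussianPDFReal μ₂ v).real_toNNReal.aemeasurable) _]
    have h5 : ∀ x, (gaussianPDFReal μ₂ v x).toNNReal •
        (gaussianPDFReal μ₁ v x / gaussianPDFReal μ₂ v x) ^ α
        = Real.exp (α * (α - 1) * (μ₁ - μ₂) ^ 2 / (2 * σ ^ 2)) *
          gaussianPDFReal (μ₂ + α * (μ₁ - μ₂)) v x := by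
      intro x
      rw [NNReal.smul_def, Real.coe_toNNReal _ (gaussianPDFReal_nonneg _ _ _), smul_eq_mul]
      exact gauss_key σ μ₁ μ₂ α x hσ
    simp_rw [h5]
    rw [integral_const_mul, integral_gaussianPDFReal_eq_one _ hv, mul_one]
  rw [renyiDiv, h4, Real.log_exp]
  have hα1 : α - 1 ≠ 0 := sub_ne_zero.mpr hα.ne'
  have hσ2 : (σ:ℝ) ^ 2 ≠ 0 := by positivity
  field_simp
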